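/- arXiv:1202.6180 — 2 statements merged into one kernel-verified Lean document; each statement's English description precedes it below -/
import Mathlib

section
/- Let Ult(ℕ) = ⋃_{n∈ℕ} TYPE[n] be the set of all ultratopologies on ℕ, viewed as a subset of 2^{P(ℕ)}. Then Ult(ℕ) is an F_σ subset of 2^{P(ℕ)} (a countable union of closed sets), but Ult(ℕ) is not compact in the subspace topology. -/
/-- The Cantor-cube topology on `Set (Set X)` (identifying `𝒫(𝒫(X))` with `2^{𝒫(X)}`):
the product topology, whose subbasic open sets are
`A⁺ = {x | A ∈ x}` and `A⁻ = {x | A ∉ x}` for `A ⊆ X`. -/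
def cantorTop (X : Type*) : TopologicalSpace (Set (Set X)) :=
  TopologicalSpace.generateFrom
    ({U | ∃ A : Set X, U = {x : Set (Set X) | A ∈ x}} ∪
     {U | ∃ A : Set X, U = {x : Set (Set X) | A ∉ x}})

/-- `TYPE[n]`: the set of ultratopologies on `ℕ` associated with the point `n`, i.e. the
families of the form `𝒫(ℕ \ {n}) ∪ F` where `F` is an ultrafilter on `ℕ` with `{n} ∉ F`. -/
def TYPEb (n : ℕ) : Set (Set (Set ℕ)) :=
  {T | ∃ F : Ultrafilter ℕ, ({n} : Set ℕ) ∉ F ∧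
    T = {A : Set ℕ | A ⊆ ({n} : Set ℕ)ᶜ} ∪ {A : Set ℕ | A ∈ F}}

open scoped Topology

lemma cantor_open_mem (A : Set ℕ) : IsOpen[cantorTop ℕ] {x : Set (Set ℕ) | A ∈ x} :=
  TopologicalSpace.GenerateOpen.basic _ (Or.inl ⟨A, rfl⟩)

lemma cantor_open_notMem (A : Set ℕ) : IsOpen[cantorTop ℕ] {x : Set (Set ℕ) | A ∉ x} :=
  TopologicalSpace.GenerateOpen.basic _ (Or.inr ⟨A, rfl⟩)

lemma cantor_closed_mem (A : Set ℕ) : IsClosed[cantorTop ℕ] {x : Set (Set ℕ) | A ∈ x} := by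
  letI := cantorTop ℕ
  rw [← isOpen_compl_iff]
  exact cantor_open_notMem A

lemma cantor_closed_notMem (A : Set ℕ) : IsClosed[cantorTop ℕ] {x : Set (Set ℕ) | A ∉ x} := by
  letI := cantorTop ℕ
  rw [← isOpen_compl_iff]
  have h : {x : Set (Set ℕ) | A ∉ x}ᶜ = {x : Set (Set ℕ) | A ∈ x} := by
    ext x; simp
  rw [h]
  exact cantor_open_mem A

/-- The closed set characterizing `TYPEb n`. -/
def Cset (n : ℕ) : Set (Set (Set ℕ)) :=
  {x | ∀ A : Set ℕ, n ∉ A → A ∈ x} ∩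
  {x | ({n} : Set ℕ) ∉ x} ∩
  {x | (Set.univ : Set ℕ) ∈ x} ∩
  {x | ∀ A B : Set ℕ, n ∈ A → n ∈ B → A ∈ x → B ∈ x → A ∩ B ∈ x} ∩
  {x | ∀ A B : Set ℕ, n ∈ A → A ⊆ B → A ∈ x → B ∈ x} ∩
  {x | ∀ A : Set ℕ, n ∈ A → A ∈ x ∨ Aᶜ ∪ {n} ∈ x}

lemma isClosed_Cset (n : ℕ) : IsClosed[cantorTop ℕ] (Cset n) := by
  letI := cantorTop ℕ
  have h1 : IsClosed {x : Set (Set ℕ) | ∀ A : Set ℕ, n ∉ A → A ∈ x} := by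
    have h : {x : Set (Set ℕ) | ∀ A : Set ℕ, n ∉ A → A ∈ x} =
        ⋂ (A : Set ℕ) (_ : n ∉ A), {x : Set (Set ℕ) | A ∈ x} := by
      ext x; simp [Set.mem_iInter]
    rw [h]
    exact isClosed_iInter fun A => isClosed_iInter fun _ => cantor_closed_mem A
  have h4 : IsClosed {x : Set (Set ℕ) |
      ∀ A B : Set ℕ, n ∈ A → n ∈ B → A ∈ x → B ∈ x → A ∩ B ∈ x} := by
    have h : {x : Set (Set ℕ) | ∀ A B : Set ℕ, n ∈ A → n ∈ B → A ∈ x → B ∈ x → A ∩ B ∈ x} =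
        ⋂ (A : Set ℕ) (B : Set ℕ) (_ : n ∈ A) (_ : n ∈ B),
          ({x : Set (Set ℕ) | A ∉ x} ∪ {x | B ∉ x} ∪ {x | A ∩ B ∈ x}) := by
      ext x
      simp only [Set.mem_iInter, Set.mem_setOf_eq, Set.mem_union]
      constructor
      · intro h A B hA hB
        by_cases hAx : A ∈ x
        · by_cases hBx : B ∈ x
          · exact Or.inr (h A B hA hB hAx hBx)
          · exact Or.inl (Or.inr hBx)
        · exact Or.inl (Or.inl hAx)
      · intro h A B hA hB hAx hBx
        rcases h A B hA hB with (h' | h') | h'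
        · exact absurd hAx h'
        · exact absurd hBx h'
        · exact h'
    rw [h]
    refine isClosed_iInter fun A => isClosed_iInter fun B =>
      isClosed_iInter fun _ => isClosed_iInter fun _ => ?_
    exact ((cantor_closed_notMem A).union (cantor_closed_notMem B)).union
      (cantor_closed_mem (A ∩ B))
  have h5 : IsClosed {x : Set (Set ℕ) | ∀ A B : Set ℕ, n ∈ A → A ⊆ B → A ∈ x → B ∈ x} := by
    have h : {x : Set (Set ℕ) | ∀ A B : Set ℕ, n ∈ A → A ⊆ B → A ∈ x → B ∈ x} =
        ⋂ (A : Set ℕ) (B : Set ℕ) (_ : n ∈ A) (_ : A ⊆ B),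
          ({x : Set (Set ℕ) | A ∉ x} ∪ {x | B ∈ x}) := by
      ext x
      simp only [Set.mem_iInter, Set.mem_setOf_eq, Set.mem_union]
      constructor
      · intro h A B hA hAB
        by_cases hAx : A ∈ x
        · exact Or.inr (h A B hA hAB hAx)
        · exact Or.inl hAx
      · intro h A B hA hAB hAx
        rcases h A B hA hAB with h' | h'
        · exact absurd hAx h'
        · exact h'
    rw [h]
    refine isClosed_iInter fun A => isClosed_iInter fun B =>
      isClosed_iInter fun _ => isClosed_iInter fun _ => ?_
    exact (cantor_closed_notMem A).union (cantor_closed_mem B)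
  have h6 : IsClosed {x : Set (Set ℕ) | ∀ A : Set ℕ, n ∈ A → A ∈ x ∨ Aᶜ ∪ {n} ∈ x} := by
    have h : {x : Set (Set ℕ) | ∀ A : Set ℕ, n ∈ A → A ∈ x ∨ Aᶜ ∪ {n} ∈ x} =
        ⋂ (A : Set ℕ) (_ : n ∈ A), ({x : Set (Set ℕ) | A ∈ x} ∪ {x | Aᶜ ∪ {n} ∈ x}) := by
      ext x; simp only [Set.mem_iInter, Set.mem_setOf_eq, Set.mem_union]
    rw [h]
    exact isClosed_iInter fun A => isClosed_iInter fun _ =>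
      (cantor_closed_mem A).union (cantor_closed_mem (Aᶜ ∪ {n}))
  exact ((((h1.inter (cantor_closed_notMem {n})).inter
    (cantor_closed_mem Set.univ)).inter h4).inter h5).inter h6

lemma TYPEb_eq_Cset (n : ℕ) : TYPEb n = Cset n := by
  ext T
  constructor
  · rintro ⟨F, hF, rfl⟩
    have memT : ∀ A : Set ℕ, n ∈ A →
        (A ∈ {A : Set ℕ | A ⊆ ({n} : Set ℕ)ᶜ} ∪ {A : Set ℕ | A ∈ F} ↔ A ∈ F) := by
      intro A hA
      constructor
      · rintro (h | h)
        · exact absurd (h hA) (by simp)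
        · exact h
      · exact fun h => Or.inr h
    refine ⟨⟨⟨⟨⟨?_, ?_⟩, ?_⟩, ?_⟩, ?_⟩, ?_⟩
    · intro A hA
      exact Or.inl (fun x hx => by rintro rfl; exact hA hx)
    · rintro (h | h)
      · exact absurd (h rfl) (by simp)
      · exact hF h
    · exact Or.inr F.toFilter.univ_mem
    · intro A B hnA hnB hAT hBT
      exact Or.inr (Filter.inter_mem ((memT A hnA).1 hAT) ((memT B hnB).1 hBT))
    · intro A B hnA hAB hAT
      exact Or.inr (Filter.mem_of_superset ((memT A hnA).1 hAT) hAB)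
    · intro A hnA
      by_cases hAF : A ∈ F
      · exact Or.inl (Or.inr hAF)
      · refine Or.inr (Or.inr ?_)
        have hc : Aᶜ ∈ F := (Ultrafilter.compl_mem_iff_notMem).2 hAF
        exact Filter.mem_of_superset hc Set.subset_union_left
  · rintro ⟨⟨⟨⟨⟨h1, h2⟩, h3⟩, h4⟩, h5⟩, h6⟩
    have hsingle : ∀ A : Set ℕ, n ∈ A → (A ∩ (Aᶜ ∪ {n}) : Set ℕ) = {n} := by
      intro A hA; ext x
      simp only [Set.mem_inter_iff, Set.mem_union, Set.mem_compl_iff, Set.mem_singleton_iff]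
      constructor
      · rintro ⟨hx, hc | rfl⟩
        · exact absurd hx hc
        · rfl
      · rintro rfl; exact ⟨hA, Or.inr rfl⟩
    have hGchar : ∀ A : Set ℕ, n ∈ A → (Aᶜ ∪ {n} ∉ T ↔ A ∈ T) := by
      intro A hA
      constructor
      · intro h
        rcases h6 A hA with h' | h'
        · exact h'
        · exact absurd h' h
      · intro hAT hcT
        exact h2 (hsingle A hA ▸ h4 A (Aᶜ ∪ {n}) hA (Or.inr rfl) hAT hcT)
    have hcompl : ∀ A : Set ℕ, ((A ∪ {n})ᶜ ∪ {n} : Set ℕ) = Aᶜ ∪ {n} := by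
      intro A; ext x
      simp only [Set.mem_union, Set.mem_compl_iff, Set.mem_singleton_iff]
      tauto
    set G : Set (Set ℕ) := {A | Aᶜ ∪ {n} ∉ T} with hG
    have hunivG : Set.univ ∈ G := by
      have h : ((Set.univ : Set ℕ)ᶜ ∪ {n}) = ({n} : Set ℕ) := by simp
      simp only [hG, Set.mem_setOf_eq, h]
      exact h2
    have hmonoG : ∀ A B : Set ℕ, A ∈ G → A ⊆ B → B ∈ G := by
      intro A B hA hAB hBT
      exact hA (h5 (Bᶜ ∪ {n}) (Aᶜ ∪ {n}) (Or.inr rfl)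
        (Set.union_subset_union_left _ (Set.compl_subset_compl.2 hAB)) hBT)
    have hcup : ∀ A : Set ℕ, A ∈ G → (A ∪ {n}) ∈ T := by
      intro A hA
      rcases h6 (A ∪ {n}) (Or.inr rfl) with h' | h'
      · exact h'
      · rw [hcompl A] at h'
        exact absurd h' hA
    have hinterG : ∀ A B : Set ℕ, A ∈ G → B ∈ G → A ∩ B ∈ G := by
      intro A B hA hB hIT
      have hAB : ((A ∪ {n}) ∩ (B ∪ {n}) : Set ℕ) ∈ T :=
        h4 _ _ (Or.inr rfl) (Or.inr rfl) (hcup A hA) (hcup B hB)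
      have heq : ((A ∪ {n}) ∩ (B ∪ {n}) : Set ℕ) = (A ∩ B) ∪ {n} := by
        ext x; simp only [Set.mem_inter_iff, Set.mem_union, Set.mem_singleton_iff]; tauto
      rw [heq] at hAB
      have hs : (((A ∩ B) ∪ {n}) ∩ ((A ∩ B)ᶜ ∪ {n}) : Set ℕ) = {n} := by
        ext x
        simp only [Set.mem_inter_iff, Set.mem_union, Set.mem_compl_iff, Set.mem_singleton_iff]
        tauto
      exact h2 (hs ▸ h4 _ _ (Or.inr rfl) (Or.inr rfl) hAB hIT)
    let f : Filter ℕ :=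
      ⟨G, hunivG, fun hA hAB => hmonoG _ _ hA hAB, fun hA hB => hinterG _ _ hA hB⟩
    have hultra : ∀ A : Set ℕ, Aᶜ ∉ f ↔ A ∈ f := by
      intro A
      show Aᶜ ∉ G ↔ A ∈ G
      constructor
      · intro h hAc
        simp only [hG, Set.mem_setOf_eq, not_not] at h
        have hs : ((Aᶜᶜ ∪ {n}) ∩ (Aᶜ ∪ {n}) : Set ℕ) = {n} := by
          ext x
          simp only [Set.mem_inter_iff, Set.mem_union, Set.mem_compl_iff,
            Set.mem_singleton_iff]
          tauto
        exact h2 (hs ▸ h4 _ _ (Or.inr rfl) (Or.inr rfl) h hAc)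
      · intro hA hAc
        have h0 : (Aᶜ ∩ A : Set ℕ) ∈ G := hinterG _ _ hAc hA
        rw [Set.compl_inter_self] at h0
        apply h0
        have he : ((∅ : Set ℕ)ᶜ ∪ {n}) = (Set.univ : Set ℕ) := by
          rw [Set.compl_empty, Set.univ_union]
        rw [he]
        exact h3
    refine ⟨Ultrafilter.ofComplNotMemIff f hultra, ?_, ?_⟩
    · show ({n} : Set ℕ) ∉ G
      simp only [hG, Set.mem_setOf_eq, not_not]
      have he : (({n} : Set ℕ)ᶜ ∪ {n}) = (Set.univ : Set ℕ) := by
        rw [Set.union_comm, Set.union_compl_self]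
      rw [he]
      exact h3
    · ext A
      constructor
      · intro hAT
        by_cases hn : n ∈ A
        · exact Or.inr ((hGchar A hn).2 hAT)
        · exact Or.inl fun x hx => by rintro rfl; exact hn hx
      · rintro (h | h)
        · refine h1 A fun hn => ?_
          exact (h hn) rfl
        · by_cases hn : n ∈ A
          · exact (hGchar A hn).1 h
          · exact h1 A hn

/-- `Ult(ℕ) = ⋃ₙ TYPE[n]` is an `F_σ` subset of `2^{𝒫(ℕ)}` but is not compact. -/
theorem stmt18 :
    (∃ C : ℕ → Set (Set (Set ℕ)), (∀ n, IsClosed[cantorTop ℕ] (C n)) ∧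
      (⋃ n, TYPEb n) = ⋃ n, C n) ∧
    ¬ @IsCompact _ (cantorTop ℕ) (⋃ n, TYPEb n) := by
  letI := cantorTop ℕ
  constructor
  · exact ⟨Cset, isClosed_Cset, by simp only [TYPEb_eq_Cset]⟩
  · intro hcomp
    -- open cover by `W i = {x | {i} ∉ x}`
    have hcover : (⋃ n, TYPEb n) ⊆ ⋃ i : ℕ, {x : Set (Set ℕ) | ({i} : Set ℕ) ∉ x} := by
      intro T hT
      rcases Set.mem_iUnion.1 hT with ⟨m, F, hF, rfl⟩
      refine Set.mem_iUnion.2 ⟨m, ?_⟩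
      rintro (h | h)
      · exact absurd (h rfl) (by simp)
      · exact hF h
    obtain ⟨t, ht⟩ := hcomp.elim_finite_subcover
      (fun i : ℕ => {x : Set (Set ℕ) | ({i} : Set ℕ) ∉ x})
      (fun i => cantor_open_notMem {i}) hcover
    set m : ℕ := t.sup id + 1 with hm
    have hmem : ∀ i ∈ t, i < m := fun i hi =>
      Nat.lt_succ_of_le (Finset.le_sup (f := id) hi)
    have hFm : ({m} : Set ℕ) ∉ (pure (m + 1) : Ultrafilter ℕ) := by
      rw [Ultrafilter.mem_pure]
      simp
    set T : Set (Set ℕ) :=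
      {A : Set ℕ | A ⊆ ({m} : Set ℕ)ᶜ} ∪ {A : Set ℕ | A ∈ (pure (m + 1) : Ultrafilter ℕ)}
      with hTdef
    have hTmem : T ∈ ⋃ n, TYPEb n :=
      Set.mem_iUnion.2 ⟨m, ⟨pure (m + 1), hFm, rfl⟩⟩
    have := ht hTmem
    rcases Set.mem_iUnion₂.1 this with ⟨i, hi, hTi⟩
    apply hTi
    refine Or.inl fun x hx hxm => ?_
    have hx1 : x = i := hx
    have hx2 : x = m := hxm
    have hx3 := hmem i hi
    omega
end

section
/- Let X be an infinite set and let Y be any set with |Y| ≤ |X|. Then Top(X), with its subspace topology from 2^{P(X)}, contains a homeomorphic copy of the Stone–Čech compactification βY of the discrete space Y; that is, there is a topological embedding of the space of ultrafilters on Y with the Stone topology (basic open sets {F : A ∈ F} for A ⊆ Y) into the subspace Top(X) of 2^{P(X)}. -/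
universe u

/-- `τ` is a topology on `X`: it contains `∅` and `X` and is closed under
pairwise intersections and arbitrary unions. -/
def IsTopologyOn {X : Type*} (τ : Set (Set X)) : Prop :=
  ∅ ∈ τ ∧ Set.univ ∈ τ ∧ (∀ a ∈ τ, ∀ b ∈ τ, a ∩ b ∈ τ) ∧ ∀ S ⊆ τ, ⋃₀ S ∈ τ

/-- The Cantor cube topology is Hausdorff. -/
theorem cantorTop_t2 (X : Type u) : @T2Space _ (cantorTop X) := by
  letI := cantorTop X
  constructor
  intro x y hxy
  have : ∃ A : Set X, (A ∈ x ∧ A ∉ y) ∨ (A ∉ x ∧ A ∈ y) := by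
    by_contra h
    push_neg at h
    apply hxy
    ext A
    rcases h A with h'
    tauto
  obtain ⟨A, hA⟩ := this
  have h1 : IsOpen {z : Set (Set X) | A ∈ z} :=
    TopologicalSpace.isOpen_generateFrom_of_mem (Or.inl ⟨A, rfl⟩)
  have h2 : IsOpen {z : Set (Set X) | A ∉ z} :=
    TopologicalSpace.isOpen_generateFrom_of_mem (Or.inr ⟨A, rfl⟩)
  rcases hA with ⟨h3, h4⟩ | ⟨h3, h4⟩
  · exact ⟨_, _, h1, h2, h3, h4, by simp [Set.disjoint_left]⟩
  · exact ⟨_, _, h2, h1, h3, h4, by simp [Set.disjoint_left]⟩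

/-- For `X` infinite and `|Y| ≤ |X|`, the subspace `Top(X)` of `2^{𝒫(X)}` contains a copy
of `βY`, the space of ultrafilters on the discrete space `Y` with the Stone topology. -/
theorem stmt19 {X Y : Type u} [Infinite X] (hcard : Cardinal.mk Y ≤ Cardinal.mk X) :
    ∃ f : Ultrafilter Y → ↥{τ : Set (Set X) | IsTopologyOn τ},
      @Topology.IsEmbedding _ _ Ultrafilter.topologicalSpace
        (TopologicalSpace.induced Subtype.val (cantorTop X)) f := by
  obtain ⟨j⟩ := Cardinal.le_def _ _ |>.mp hcard
  letI := cantorTop X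
  haveI : T2Space (Set (Set X)) := cantorTop_t2 X
  -- the map
  set g : Ultrafilter Y → Set (Set X) := fun F => {U | U = ∅ ∨ j ⁻¹' U ∈ F} with hg
  have hmem : ∀ F, g F ∈ {τ : Set (Set X) | IsTopologyOn τ} := by
    intro F
    refine ⟨Or.inl rfl, Or.inr (by rw [Set.preimage_univ]; exact Filter.univ_mem), ?_, ?_⟩
    · rintro a (rfl | ha) b hb
      · exact Or.inl (by simp)
      · rcases hb with rfl | hb
        · exact Or.inl (by simp)
        · exact Or.inr (by rw [Set.preimage_inter]; exact F.inter_mem ha hb)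
    · intro S hS
      by_cases h : ∃ U ∈ S, j ⁻¹' U ∈ F
      · obtain ⟨U, hU, hUF⟩ := h
        exact Or.inr (Filter.mem_of_superset hUF
          (Set.preimage_mono (Set.subset_sUnion_of_mem hU)))
      · push_neg at h
        left
        have : ∀ U ∈ S, U = ∅ := by
          intro U hU
          rcases hS hU with rfl | h'
          · rfl
          · exact absurd h' (h U hU)
        simp only [Set.sUnion_eq_empty]
        exact this
  refine ⟨fun F => ⟨g F, hmem F⟩, ?_⟩
  have step : ∀ F G : Ultrafilter Y, g F = g G → ∀ s, s ∈ F → s ∈ G := by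
    intro F G h s hs
    have h1 : j '' s ∈ g F :=
      Or.inr (by rw [Set.preimage_image_eq _ j.injective]; exact hs)
    rw [h] at h1
    rcases h1 with h1 | h1
    · rw [Set.image_eq_empty] at h1
      subst h1
      simp at hs
    · rwa [Set.preimage_image_eq _ j.injective] at h1
  have hinj : Function.Injective g := by
    intro F G h
    ext s
    exact ⟨step F G h s, step G F h.symm s⟩
  have hcont : @Continuous _ _ _ (cantorTop X) g := by
    unfold cantorTop
    rw [continuous_generateFrom_iff]
    rintro s (⟨A, rfl⟩ | ⟨A, rfl⟩)
    · by_cases hA : A = ∅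
      · subst hA
        have : (fun F : Ultrafilter Y => {U | U = ∅ ∨ j ⁻¹' U ∈ F}) ⁻¹'
            {x | (∅ : Set X) ∈ x} = Set.univ := by
          ext F; simp
        rw [this]; exact isOpen_univ
      · have : (fun F : Ultrafilter Y => {U | U = ∅ ∨ j ⁻¹' U ∈ F}) ⁻¹'
            {x | A ∈ x} = {F : Ultrafilter Y | j ⁻¹' A ∈ F} := by
          ext F; simp [hA]
        rw [this]; exact ultrafilter_isOpen_basic _
    · by_cases hA : A = ∅
      · subst hA
        have : (fun F : Ultrafilter Y => {U | U = ∅ ∨ j ⁻¹' U ∈ F}) ⁻¹'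
            {x | (∅ : Set X) ∉ x} = ∅ := by
          ext F; simp
        rw [this]; exact isOpen_empty
      · have : (fun F : Ultrafilter Y => {U | U = ∅ ∨ j ⁻¹' U ∈ F}) ⁻¹'
            {x | A ∉ x} = {F : Ultrafilter Y | (j ⁻¹' A)ᶜ ∈ F} := by
          ext F
          simp only [Set.mem_preimage, Set.mem_setOf_eq, not_or, Ultrafilter.compl_mem_iff_notMem]
          tauto
        rw [this]; exact ultrafilter_isOpen_basic _
  have hcont' : Continuous (fun F => (⟨g F, hmem F⟩ : ↥{τ : Set (Set X) | IsTopologyOn τ})) :=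
    Continuous.subtype_mk hcont _
  have hinj' : Function.Injective
      (fun F => (⟨g F, hmem F⟩ : ↥{τ : Set (Set X) | IsTopologyOn τ})) := by
    intro F G h
    exact hinj (congrArg Subtype.val h)
  exact (hcont'.isClosedEmbedding hinj').isEmbedding
end
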